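/- Let s₀ ∈ ℝ, let a₁, b₁ > 0, let 0 ≤ γ < 2 min(a₁, b₁), and let ρ₁, ρ₂ : ℝ → ℝ each be one of the two functions s ↦ e^{γ|s|} or s ↦ e^{−γ|s|}. Suppose a, b : ℝ → ℝ are measurable with |a(s)| ≤ a_N e^{−a₁ s} and |b(s)| ≤ b_N e^{−b₁ s} for all s ≥ s₀, where a_N, b_N ≥ 0. Then there is a constant C depending only on a₁, b₁, γ such that the weighted L² norm of the kernel (a ◇ b)(s, t) = ∫₀^∞ a(s+z) b(t+z) dz satisfies (∫_{s₀}^∞ ∫_{s₀}^∞ (a ◇ b)(s,t)² ρ₁(s) ρ₂(t)^{−1} ds dt)^{1/2} ≤ C · (a_N b_N / (a₁ + b₁)) · e^{−(a₁+b₁) s₀ + γ|s₀|}. -/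

import Mathlib

open Real Filter MeasureTheory

/-- Physicists' Hermite polynomial `H_n(x) = (-1)^n e^{x²} (d^n/dx^n) e^{-x²}`. -/
noncomputable def physHermite (n : ℕ) (x : ℝ) : ℝ :=
  (-1 : ℝ) ^ n * Real.exp (x ^ 2) * iteratedDeriv n (fun t : ℝ => Real.exp (-t ^ 2)) x

/-- Normalizing constant `h_n = √π 2^n n!`. -/
noncomputable def hNorm (n : ℕ) : ℝ := Real.sqrt Real.pi * 2 ^ n * (n.factorial : ℝ)

/-- Oscillator wave function `φ_n(x) = h_n^{-1/2} e^{-x²/2} H_n(x)`. -/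
noncomputable def osc (n : ℕ) (x : ℝ) : ℝ :=
  hNorm n ^ (-(1 : ℝ) / 2) * Real.exp (-x ^ 2 / 2) * physHermite n x

/-- Airy function `Ai(x) = π⁻¹ lim_{R→∞} ∫₀^R cos(t³/3 + xt) dt`. -/
noncomputable def Ai (x : ℝ) : ℝ :=
  Real.pi⁻¹ *
    limUnder Filter.atTop (fun R : ℝ => ∫ t in (0 : ℝ)..R, Real.cos (t ^ 3 / 3 + x * t))

/-- Scaling constant `τ_N = 2^{-1/2} N^{-1/6}`. -/
noncomputable def tauN (N : ℕ) : ℝ := (2 : ℝ) ^ (-(1 : ℝ) / 2) * (N : ℝ) ^ (-(1 : ℝ) / 6)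

/-- `Δ_N = (√(2N+1) - √(2N-1))/τ_N`. -/
noncomputable def DeltaN (N : ℕ) : ℝ :=
  (Real.sqrt (2 * N + 1) - Real.sqrt (2 * N - 1)) / tauN N

/-- The kernel `(a ◇ b)(s,t) = ∫₀^∞ a(s+z) b(t+z) dz`. -/
noncomputable def diamond (a b : ℝ → ℝ) (s t : ℝ) : ℝ :=
  ∫ z in Set.Ioi (0 : ℝ), a (s + z) * b (t + z)

open scoped Topology

lemma my_integral_exp_neg_mul_Ioi {b : ℝ} (hb : 0 < b) (c : ℝ) :
    ∫ x in Set.Ioi c, Real.exp (-(b * x)) = Real.exp (-(b * c)) / b := by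
  have hd : ∀ x ∈ Set.Ici c, HasDerivAt (fun x => -Real.exp (-(b * x)) / b)
      (Real.exp (-(b * x))) x := by
    intro x _
    have h1 : HasDerivAt (fun x : ℝ => -(b * x)) (-b) x := by
      simpa [neg_mul] using (hasDerivAt_id x).const_mul (-b)
    have := (h1.exp.neg.div_const b)
    convert this using 1
    · rfl
    · rfl
    · rfl
    rw [mul_neg, neg_neg, mul_div_assoc, div_self hb.ne', mul_one]
  have hint : IntegrableOn (fun x => Real.exp (-(b * x))) (Set.Ioi c) := by
    simpa [neg_mul] using exp_neg_integrableOn_Ioi c hb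
  have htend : Tendsto (fun x => -Real.exp (-(b * x)) / b) atTop (𝓝 0) := by
    have h2 : Tendsto (fun x : ℝ => -(b * x)) atTop atBot := by
      simpa [neg_mul] using tendsto_id.const_mul_atTop_of_neg (neg_neg_iff_pos.2 hb)
    have := (Real.tendsto_exp_atBot.comp h2).neg.div_const b
    simpa using this
  have := integral_Ioi_of_hasDerivAt_of_tendsto' hd hint htend
  rw [this]
  field_simp
  ring

lemma diamond_abs_le {a b : ℝ → ℝ} {a₁ b₁ aN bN s₀ : ℝ} (ha₁ : 0 < a₁) (hb₁ : 0 < b₁)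
    (haN : 0 ≤ aN) (hbN : 0 ≤ bN)
    (hA : ∀ s, s₀ ≤ s → |a s| ≤ aN * Real.exp (-(a₁ * s)))
    (hB : ∀ s, s₀ ≤ s → |b s| ≤ bN * Real.exp (-(b₁ * s)))
    {s t : ℝ} (hs : s₀ ≤ s) (ht : s₀ ≤ t) :
    |diamond a b s t| ≤ aN * bN / (a₁ + b₁) * Real.exp (-(a₁ * s) - b₁ * t) := by
  have hab : 0 < a₁ + b₁ := by linarith
  set E : ℝ := Real.exp (-(a₁ * s) - b₁ * t) with hE
  have hgint : IntegrableOn (fun z => aN * bN * E * Real.exp (-((a₁ + b₁) * z)))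
      (Set.Ioi (0 : ℝ)) :=
    by simpa only [neg_mul, IntegrableOn] using (exp_neg_integrableOn_Ioi 0 hab).const_mul (aN * bN * E)
  have hle : ∀ᵐ z ∂(volume.restrict (Set.Ioi (0 : ℝ))),
      ‖a (s + z) * b (t + z)‖ ≤ aN * bN * E * Real.exp (-((a₁ + b₁) * z)) := by
    filter_upwards [ae_restrict_mem measurableSet_Ioi] with z hz
    have hz0 : (0 : ℝ) ≤ z := le_of_lt hz
    have h1 := hA (s + z) (by linarith)
    have h2 := hB (t + z) (by linarith)
    calc ‖a (s + z) * b (t + z)‖ = |a (s + z)| * |b (t + z)| := by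
          rw [Real.norm_eq_abs, abs_mul]
      _ ≤ (aN * Real.exp (-(a₁ * (s + z)))) * (bN * Real.exp (-(b₁ * (t + z)))) :=
          mul_le_mul h1 h2 (abs_nonneg _) (by positivity)
      _ = aN * bN * E * Real.exp (-((a₁ + b₁) * z)) := by
          rw [hE, show (-(a₁ * (s+z)) : ℝ) = (-(a₁*s) - b₁*t) + (b₁*t - a₁*z) by ring]
          rw [Real.exp_add, show (-(b₁ * (t+z)) : ℝ) = -(b₁*t) - b₁*z by ring]
          rw [show (-((a₁+b₁)*z) : ℝ) = (b₁*t - a₁*z) + (-(b₁*t) - b₁*z) by ring, Real.exp_add]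
          ring
  have hnorm := MeasureTheory.norm_integral_le_of_norm_le hgint hle
  calc |diamond a b s t| = ‖∫ z in Set.Ioi (0:ℝ), a (s + z) * b (t + z)‖ :=
        (Real.norm_eq_abs _).symm
    _ ≤ ∫ z in Set.Ioi (0:ℝ), aN * bN * E * Real.exp (-((a₁ + b₁) * z)) := hnorm
    _ = aN * bN / (a₁ + b₁) * E := by
        rw [MeasureTheory.integral_const_mul, my_integral_exp_neg_mul_Ioi hab]
        simp
        ring

/-- Weighted Hilbert–Schmidt (L²) norm bound for the kernel `a ◇ b`:
if `|a(s)| ≤ a_N e^{-a₁ s}` and `|b(s)| ≤ b_N e^{-b₁ s}` for `s ≥ s₀` and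
`0 ≤ γ < 2 min(a₁,b₁)`, with weights `ρ₁, ρ₂` each equal to `e^{γ|s|}` or `e^{-γ|s|}`, then
`‖a ◇ b‖ ≤ C (a_N b_N/(a₁+b₁)) e^{-(a₁+b₁)s₀ + γ|s₀|}` with `C` depending only on
`a₁, b₁, γ`. -/
theorem diamond_weighted_hs_bound (a₁ b₁ γ : ℝ) (ha₁ : 0 < a₁) (hb₁ : 0 < b₁)
    (hγ0 : 0 ≤ γ) (hγ : γ < 2 * min a₁ b₁) :
    ∃ C : ℝ, ∀ s₀ : ℝ, ∀ ρ₁ ρ₂ : ℝ → ℝ,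
      ρ₁ ∈ ({fun s => Real.exp (γ * |s|), fun s => Real.exp (-(γ * |s|))} : Set (ℝ → ℝ)) →
      ρ₂ ∈ ({fun s => Real.exp (γ * |s|), fun s => Real.exp (-(γ * |s|))} : Set (ℝ → ℝ)) →
      ∀ a b : ℝ → ℝ, ∀ aN bN : ℝ, Measurable a → Measurable b → 0 ≤ aN → 0 ≤ bN →
      (∀ s : ℝ, s₀ ≤ s → |a s| ≤ aN * Real.exp (-(a₁ * s))) →
      (∀ s : ℝ, s₀ ≤ s → |b s| ≤ bN * Real.exp (-(b₁ * s))) →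
      Real.sqrt (∫ s in Set.Ioi s₀, ∫ t in Set.Ioi s₀,
          diamond a b s t ^ 2 * ρ₁ s * (ρ₂ t)⁻¹) ≤
        C * (aN * bN / (a₁ + b₁)) * Real.exp (-(a₁ + b₁) * s₀ + γ * |s₀|) := by
  have hα : 0 < 2 * a₁ - γ := by
    have := min_le_left a₁ b₁; linarith
  have hβ : 0 < 2 * b₁ - γ := by
    have := min_le_right a₁ b₁; linarith
  refine ⟨(Real.sqrt ((2 * a₁ - γ) * (2 * b₁ - γ)))⁻¹, ?_⟩
  intro s₀ ρ₁ ρ₂ hρ₁ hρ₂ a b aN bN ha hb haN hbN hA hB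
  have hab : 0 < a₁ + b₁ := by linarith
  set M : ℝ := aN * bN / (a₁ + b₁) with hM
  have hM0 : 0 ≤ M := by positivity
  simp only [Set.mem_insert_iff, Set.mem_singleton_iff] at hρ₁ hρ₂
  obtain ⟨hρ₁le, hρ₁pos⟩ : (∀ u : ℝ, ρ₁ u ≤ Real.exp (γ * |u|)) ∧ (∀ u : ℝ, 0 < ρ₁ u) := by
    rcases hρ₁ with rfl | rfl
    · exact ⟨fun u => le_rfl, fun u => Real.exp_pos _⟩
    · exact ⟨fun u => Real.exp_le_exp.2 (by nlinarith [abs_nonneg u]),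
        fun u => Real.exp_pos _⟩
  obtain ⟨hρ₂inv, hρ₂pos⟩ : (∀ u : ℝ, (ρ₂ u)⁻¹ ≤ Real.exp (γ * |u|)) ∧ (∀ u : ℝ, 0 < ρ₂ u) := by
    rcases hρ₂ with rfl | rfl
    · refine ⟨fun u => ?_, fun u => Real.exp_pos _⟩
      rw [← Real.exp_neg]
      exact Real.exp_le_exp.2 (by nlinarith [abs_nonneg u])
    · exact ⟨fun u => le_of_eq (by simp [Real.exp_neg]),
        fun u => Real.exp_pos _⟩
  have hnn : ∀ u v : ℝ, 0 ≤ diamond a b u v ^ 2 * ρ₁ u * (ρ₂ v)⁻¹ := fun u v =>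
    mul_nonneg (mul_nonneg (sq_nonneg _) (hρ₁pos u).le) (inv_nonneg.2 (hρ₂pos v).le)
  have hK : ∀ u v : ℝ, s₀ ≤ u → s₀ ≤ v →
      |diamond a b u v| ≤ M * Real.exp (-(a₁ * u) - b₁ * v) := fun u v hu hv =>
    diamond_abs_le ha₁ hb₁ haN hbN hA hB hu hv
  have habs : ∀ u : ℝ, s₀ ≤ u → |u| ≤ (u - s₀) + |s₀| := by
    intro u hu
    calc |u| = |s₀ + (u - s₀)| := by ring_nf
      _ ≤ |s₀| + |u - s₀| := abs_add_le _ _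
      _ = (u - s₀) + |s₀| := by rw [abs_of_nonneg (by linarith : (0:ℝ) ≤ u - s₀)]; ring
  -- pointwise bound on the integrand
  have hpt : ∀ u v : ℝ, s₀ ≤ u → s₀ ≤ v →
      diamond a b u v ^ 2 * ρ₁ u * (ρ₂ v)⁻¹ ≤
        (M ^ 2 * Real.exp (2 * (γ * |s₀|) - 2 * (γ * s₀)) *
          Real.exp (-((2 * a₁ - γ) * u))) * Real.exp (-((2 * b₁ - γ) * v)) := by
    intro u v hu hv
    have h1 : diamond a b u v ^ 2 ≤ (M * Real.exp (-(a₁ * u) - b₁ * v)) ^ 2 := by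
      rw [← sq_abs]
      exact pow_le_pow_left₀ (abs_nonneg _) (hK u v hu hv) 2
    calc diamond a b u v ^ 2 * ρ₁ u * (ρ₂ v)⁻¹
        ≤ (M * Real.exp (-(a₁ * u) - b₁ * v)) ^ 2 * Real.exp (γ * |u|) * Real.exp (γ * |v|) :=
          mul_le_mul (mul_le_mul h1 (hρ₁le u) (hρ₁pos u).le (by positivity)) (hρ₂inv v)
            (inv_nonneg.2 (hρ₂pos v).le) (by positivity)
      _ = M ^ 2 * Real.exp ((-(a₁*u) - b₁*v) + (-(a₁*u) - b₁*v) + γ*|u| + γ*|v|) := by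
          rw [Real.exp_add, Real.exp_add, Real.exp_add]; ring
      _ ≤ M ^ 2 * Real.exp ((2 * (γ*|s₀|) - 2 * (γ*s₀)) + -((2*a₁-γ)*u) + -((2*b₁-γ)*v)) := by
          refine mul_le_mul_of_nonneg_left (Real.exp_le_exp.2 ?_) (by positivity)
          have hu' := mul_le_mul_of_nonneg_left (habs u hu) hγ0
          have hv' := mul_le_mul_of_nonneg_left (habs v hv) hγ0
          nlinarith [hu', hv']
      _ = (M ^ 2 * Real.exp (2 * (γ * |s₀|) - 2 * (γ * s₀)) *
            Real.exp (-((2 * a₁ - γ) * u))) * Real.exp (-((2 * b₁ - γ) * v)) := by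
          rw [Real.exp_add, Real.exp_add]; ring
  -- inner integral bound
  have hinner : ∀ u : ℝ, s₀ ≤ u →
      (∫ t in Set.Ioi s₀, diamond a b u t ^ 2 * ρ₁ u * (ρ₂ t)⁻¹) ≤
        (M ^ 2 * Real.exp (2 * (γ * |s₀|) - 2 * (γ * s₀)) *
          (Real.exp (-((2 * b₁ - γ) * s₀)) / (2 * b₁ - γ))) * Real.exp (-((2 * a₁ - γ) * u)) := by
    intro u hu
    have step : (∫ t in Set.Ioi s₀, diamond a b u t ^ 2 * ρ₁ u * (ρ₂ t)⁻¹) ≤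
        ∫ t in Set.Ioi s₀, (M ^ 2 * Real.exp (2 * (γ * |s₀|) - 2 * (γ * s₀)) *
          Real.exp (-((2 * a₁ - γ) * u))) * Real.exp (-((2 * b₁ - γ) * t)) := by
      refine integral_mono_of_nonneg ?_ ?_ ?_
      · filter_upwards with t; exact hnn u t
      · exact Integrable.const_mul
          (by simpa only [neg_mul, IntegrableOn] using exp_neg_integrableOn_Ioi s₀ hβ) _
      · filter_upwards [ae_restrict_mem measurableSet_Ioi] with t ht
        exact hpt u t hu (le_of_lt ht)
    rw [MeasureTheory.integral_const_mul, my_integral_exp_neg_mul_Ioi hβ] at step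
    refine step.trans (le_of_eq ?_)
    ring
  -- outer integral bound
  have houter : (∫ s in Set.Ioi s₀, ∫ t in Set.Ioi s₀,
        diamond a b s t ^ 2 * ρ₁ s * (ρ₂ t)⁻¹) ≤
      (M ^ 2 * Real.exp (2 * (γ * |s₀|) - 2 * (γ * s₀)) *
        (Real.exp (-((2 * b₁ - γ) * s₀)) / (2 * b₁ - γ))) *
          (Real.exp (-((2 * a₁ - γ) * s₀)) / (2 * a₁ - γ)) := by
    have step : (∫ s in Set.Ioi s₀, ∫ t in Set.Ioi s₀,
          diamond a b s t ^ 2 * ρ₁ s * (ρ₂ t)⁻¹) ≤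
        ∫ s in Set.Ioi s₀, (M ^ 2 * Real.exp (2 * (γ * |s₀|) - 2 * (γ * s₀)) *
          (Real.exp (-((2 * b₁ - γ) * s₀)) / (2 * b₁ - γ))) * Real.exp (-((2 * a₁ - γ) * s)) := by
      refine integral_mono_of_nonneg ?_ ?_ ?_
      · filter_upwards with u; exact integral_nonneg (fun v => hnn u v)
      · exact Integrable.const_mul
          (by simpa only [neg_mul, IntegrableOn] using exp_neg_integrableOn_Ioi s₀ hα) _
      · filter_upwards [ae_restrict_mem measurableSet_Ioi] with u hu
        exact hinner u (le_of_lt hu)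
    rw [MeasureTheory.integral_const_mul, my_integral_exp_neg_mul_Ioi hα] at step
    exact step
  -- conclude
  have hR0 : 0 ≤ (Real.sqrt ((2 * a₁ - γ) * (2 * b₁ - γ)))⁻¹ * M *
      Real.exp (-(a₁ + b₁) * s₀ + γ * |s₀|) := by positivity
  have hfin : (M ^ 2 * Real.exp (2 * (γ * |s₀|) - 2 * (γ * s₀)) *
        (Real.exp (-((2 * b₁ - γ) * s₀)) / (2 * b₁ - γ))) *
          (Real.exp (-((2 * a₁ - γ) * s₀)) / (2 * a₁ - γ)) =
      ((Real.sqrt ((2 * a₁ - γ) * (2 * b₁ - γ)))⁻¹ * M *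
        Real.exp (-(a₁ + b₁) * s₀ + γ * |s₀|)) ^ 2 := by
    have h1 : ((Real.sqrt ((2 * a₁ - γ) * (2 * b₁ - γ)))⁻¹) ^ 2 =
        ((2 * a₁ - γ) * (2 * b₁ - γ))⁻¹ := by
      rw [← Real.sqrt_inv, Real.sq_sqrt (by positivity)]
    have h2 : Real.exp (-(a₁ + b₁) * s₀ + γ * |s₀|) ^ 2 =
        Real.exp (2 * (-(a₁ + b₁) * s₀ + γ * |s₀|)) := by
      rw [pow_two, ← Real.exp_add]; ring_nf
    rw [mul_pow, mul_pow, h1, h2]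
    rw [show (2 * (-(a₁ + b₁) * s₀ + γ * |s₀|) : ℝ) =
      (2 * (γ * |s₀|) - 2 * (γ * s₀)) + (-((2 * b₁ - γ) * s₀)) + (-((2 * a₁ - γ) * s₀)) by ring]
    rw [Real.exp_add, Real.exp_add]
    field_simp
  calc Real.sqrt (∫ s in Set.Ioi s₀, ∫ t in Set.Ioi s₀,
          diamond a b s t ^ 2 * ρ₁ s * (ρ₂ t)⁻¹)
      ≤ Real.sqrt (((Real.sqrt ((2 * a₁ - γ) * (2 * b₁ - γ)))⁻¹ * M *
          Real.exp (-(a₁ + b₁) * s₀ + γ * |s₀|)) ^ 2) :=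
        Real.sqrt_le_sqrt (by rw [← hfin]; exact houter)
    _ = (Real.sqrt ((2 * a₁ - γ) * (2 * b₁ - γ)))⁻¹ * M *
          Real.exp (-(a₁ + b₁) * s₀ + γ * |s₀|) := Real.sqrt_sq hR0
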